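/- Let γ : [0,1] → M be an absolutely continuous curve with speed g(t) = |γ'(t)|, let σ be the reparametrization σ(t) = (∫₀ᵗ √(1+g²))/(∫₀¹ √(1+g²)), τ = σ⁻¹, and γ₁ = γ∘τ. Then ‖γ₁'‖_∞ ≤ 1 + L(γ), where L(γ) = ∫₀¹ g(t) dt is the length of γ. -/

import Mathlib

open intervalIntegral

/-- Speed bound for the reparametrized loop: if `γ` has speed `g = |γ'|`, `σ` is the
reparametrization built from `g`, `τ` its inverse, and `γ₁ = γ ∘ τ`, then
`‖γ₁'‖_∞ ≤ 1 + L(γ)` where `L(γ) = ∫₀¹ g`. -/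
theorem reparametrized_speed_bound {m : ℕ}
    (γ γ' : ℝ → EuclideanSpace ℝ (Fin m)) (g τ : ℝ → ℝ)
    (hg : Continuous g) (hgpos : ∀ t, 0 ≤ g t)
    (hγ : ∀ t ∈ Set.Icc (0:ℝ) 1, HasDerivAt γ (γ' t) t)
    (hspeed : ∀ t ∈ Set.Icc (0:ℝ) 1, ‖γ' t‖ = g t)
    (hτ : ∀ t ∈ Set.Icc (0:ℝ) 1, τ t ∈ Set.Icc (0:ℝ) 1 ∧
      ((∫ s in (0:ℝ)..(τ t), Real.sqrt (1 + g s ^ 2)) /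
        (∫ s in (0:ℝ)..1, Real.sqrt (1 + g s ^ 2))) = t) :
    ∀ t ∈ Set.Icc (0:ℝ) 1, ∀ v : EuclideanSpace ℝ (Fin m),
      HasDerivAt (γ ∘ τ) v t → ‖v‖ ≤ 1 + ∫ s in (0:ℝ)..1, g s := by
  intro t ht v hv
  set f : ℝ → ℝ := fun s => Real.sqrt (1 + g s ^ 2) with hfdef
  have hfc : Continuous f := Real.continuous_sqrt.comp (continuous_const.add (hg.pow 2))
  have hfpos : ∀ s, 0 < f s := fun s =>
    Real.sqrt_pos.2 (by nlinarith [sq_nonneg (g s)])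
  have hf1 : ∀ s, 1 ≤ f s := by
    intro s
    rw [show (1:ℝ) = Real.sqrt 1 by simp]
    exact Real.sqrt_le_sqrt (by nlinarith [sq_nonneg (g s)])
  have hint : ∀ a b : ℝ, IntervalIntegrable f MeasureTheory.volume a b :=
    fun a b => hfc.intervalIntegrable a b
  set D : ℝ := ∫ s in (0:ℝ)..1, f s with hDdef
  have hD1 : 1 ≤ D := by
    calc (1:ℝ) = ∫ s in (0:ℝ)..1, (1:ℝ) := by simp
    _ ≤ D := intervalIntegral.integral_mono_on zero_le_one intervalIntegrable_const
        (hint 0 1) (fun s _ => hf1 s)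
  have hD0 : 0 < D := lt_of_lt_of_le one_pos hD1
  set S : ℝ → ℝ := fun x => (∫ s in (0:ℝ)..x, f s) / D with hSdef
  have hS : ∀ x, HasDerivAt S (f x / D) x := by
    intro x
    exact (intervalIntegral.integral_hasDerivAt_right (hint 0 x)
      (hfc.stronglyMeasurable.stronglyMeasurableAtFilter) hfc.continuousAt).div_const D
  have hmono : StrictMono S :=
    strictMono_of_deriv_pos (fun x => by rw [(hS x).deriv]; positivity)
  have hS0 : S 0 = 0 := by simp [hSdef]
  have hS1 : S 1 = 1 := by
    simp only [hSdef]
    rw [← hDdef, div_self hD0.ne']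
  -- τ is a right inverse of S on [0,1]
  have hSx : ∀ y ∈ Set.Icc (0:ℝ) 1, S y ∈ Set.Icc (0:ℝ) 1 := by
    intro y hy
    constructor
    · rw [← hS0]; exact hmono.monotone hy.1
    · rw [← hS1]; exact hmono.monotone hy.2
  have hinv : ∀ y ∈ Set.Icc (0:ℝ) 1, τ (S y) = y := by
    intro y hy
    obtain ⟨_, h2⟩ := hτ (S y) (hSx y hy)
    exact hmono.injective h2
  obtain ⟨hx, hSxt⟩ := hτ t ht
  set x : ℝ := τ t with hxdef
  have hSxt' : S x = t := hSxt
  -- chain rule: ((γ∘τ)∘S)' x = (f x / D) • v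
  have hv' : HasDerivAt (γ ∘ τ) v (S x) := hSxt' ▸ hv
  have hchain : HasDerivAt ((γ ∘ τ) ∘ S) ((f x / D) • v) x :=
    HasDerivAt.scomp x hv' (hS x)
  -- γ = (γ∘τ)∘S on [0,1]
  have hcongr : ∀ y ∈ Set.Icc (0:ℝ) 1, γ y = ((γ ∘ τ) ∘ S) y := by
    intro y hy
    simp [Function.comp, hinv y hy]
  have h1 : HasDerivWithinAt γ ((f x / D) • v) (Set.Icc (0:ℝ) 1) x :=
    (hchain.hasDerivWithinAt).congr hcongr (hcongr x hx)
  have h2 : HasDerivWithinAt γ (γ' x) (Set.Icc (0:ℝ) 1) x := (hγ x hx).hasDerivWithinAt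
  have hud : UniqueDiffWithinAt ℝ (Set.Icc (0:ℝ) 1) x := (uniqueDiffOn_Icc one_pos) x hx
  have heq : (f x / D) • v = γ' x := (h1.derivWithin hud).symm.trans (h2.derivWithin hud)
  have hnorm : (f x / D) * ‖v‖ = g x := by
    have := congrArg norm heq
    rw [norm_smul, Real.norm_eq_abs, abs_of_nonneg (by positivity), hspeed x hx] at this
    exact this
  -- ‖v‖ ≤ D
  have hvD : ‖v‖ ≤ D := by
    have hgf : g x ≤ f x := by
      rw [show g x = Real.sqrt (g x ^ 2) by rw [Real.sqrt_sq (hgpos x)]]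
      exact Real.sqrt_le_sqrt (by nlinarith)
    have h3 : f x * ‖v‖ = g x * D := by
      field_simp at hnorm
      linarith [hnorm]
    nlinarith [hfpos x, norm_nonneg v]
  -- D ≤ 1 + ∫ g
  have hD2 : D ≤ 1 + ∫ s in (0:ℝ)..1, g s := by
    have hle : D ≤ ∫ s in (0:ℝ)..1, (1 + g s) := by
      apply intervalIntegral.integral_mono_on zero_le_one (hint 0 1)
        ((continuous_const.add hg).intervalIntegrable 0 1)
      intro s _
      show f s ≤ 1 + g s
      rw [show (1 + g s) = Real.sqrt ((1 + g s) ^ 2) from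
        (Real.sqrt_sq (by linarith [hgpos s])).symm]
      exact Real.sqrt_le_sqrt (by nlinarith [hgpos s])
    have : (∫ s in (0:ℝ)..1, (1 + g s)) = 1 + ∫ s in (0:ℝ)..1, g s := by
      rw [intervalIntegral.integral_add intervalIntegrable_const (hg.intervalIntegrable 0 1)]
      simp
    linarith
  linarith
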